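/- (Andreief's identity) Let w be a nonnegative integrable function on an interval I and f₁,…,f_m, g₁,…,g_m be functions such that all products f_i g_j w are integrable. Then ∫_{I^m} det(f_i(y_j))_{i,j=1}^m · det(g_i(y_j))_{i,j=1}^m · ∏_{i=1}^m w(y_i) dy₁⋯dy_m = m! · det( ∫_I f_i(y) g_j(y) w(y) dy )_{i,j=1}^m. -/

import Mathlib

open MeasureTheory

private lemma indicator_pi_prod {m : ℕ} (I : Set ℝ) (h : Fin m → ℝ → ℝ)
    (y : Fin m → ℝ) :
    (Set.univ.pi fun _ => I).indicator (fun y : Fin m → ℝ => ∏ j, h j (y j)) y =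
      ∏ j, I.indicator (h j) (y j) := by
  by_cases hy : y ∈ Set.univ.pi fun _ => I
  · rw [Set.indicator_of_mem hy]
    exact Finset.prod_congr rfl fun j _ =>
      (Set.indicator_of_mem (hy j trivial) _).symm
  · rw [Set.indicator_of_notMem hy]
    simp only [Set.mem_pi, Set.mem_univ, forall_true_left, not_forall] at hy
    obtain ⟨j, hj⟩ := hy
    exact (Finset.prod_eq_zero (Finset.mem_univ j)
      (Set.indicator_of_notMem hj _)).symm

private lemma integrableOn_pi_prod {m : ℕ} {I : Set ℝ} (hI : MeasurableSet I)
    {h : Fin m → ℝ → ℝ} (hint : ∀ j, IntegrableOn (h j) I) :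
    IntegrableOn (fun y : Fin m → ℝ => ∏ j, h j (y j))
      (Set.univ.pi fun _ => I) := by
  rw [← integrable_indicator_iff (MeasurableSet.univ_pi fun _ => hI)]
  have : (Set.univ.pi fun _ => I).indicator (fun y : Fin m → ℝ => ∏ j, h j (y j)) =
      fun y => ∏ j, I.indicator (h j) (y j) := funext (indicator_pi_prod I h)
  rw [this]
  exact Integrable.fintype_prod fun j => (integrable_indicator_iff hI).2 (hint j)

private lemma integral_pi_prod {m : ℕ} {I : Set ℝ} (hI : MeasurableSet I)
    {h : Fin m → ℝ → ℝ} (hint : ∀ j, IntegrableOn (h j) I) :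
    (∫ y : Fin m → ℝ in Set.univ.pi fun _ => I, ∏ j, h j (y j)) =
      ∏ j, ∫ y in I, h j y := by
  rw [← integral_indicator (MeasurableSet.univ_pi fun _ => hI)]
  have : (Set.univ.pi fun _ => I).indicator (fun y : Fin m → ℝ => ∏ j, h j (y j)) =
      fun y => ∏ j, I.indicator (h j) (y j) := funext (indicator_pi_prod I h)
  rw [this, integral_fintype_prod_volume_eq_prod (f := fun j => I.indicator (h j))]
  exact Finset.prod_congr rfl fun j _ => integral_indicator hI

/-- Andreief's identity:
`∫_{I^m} det(f_i(y_j)) det(g_i(y_j)) ∏ w(y_i) dy = m! det(∫_I f_i g_j w)`. -/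
theorem andreief_identity (m : ℕ) (I : Set ℝ) (hI : MeasurableSet I)
    (w : ℝ → ℝ) (hw : ∀ y, 0 ≤ w y) (hwm : Measurable w) (hwi : IntegrableOn w I)
    (f g : Fin m → ℝ → ℝ) (hfm : ∀ i, Measurable (f i)) (hgm : ∀ i, Measurable (g i))
    (hfg : ∀ i j, IntegrableOn (fun y => f i y * g j y * w y) I) :
    (∫ y : Fin m → ℝ in Set.univ.pi fun _ => I,
        Matrix.det (Matrix.of fun i j : Fin m => f i (y j)) *
          Matrix.det (Matrix.of fun i j : Fin m => g i (y j)) * ∏ i, w (y i)) =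
      (Nat.factorial m) *
        Matrix.det (Matrix.of fun i j : Fin m => ∫ y in I, f i y * g j y * w y) := by
  classical
  set S : Set (Fin m → ℝ) := Set.univ.pi fun _ => I with hS
  set h : Fin m → Fin m → ℝ → ℝ := fun i j y => f i y * g j y * w y with hh
  set A : Matrix (Fin m) (Fin m) ℝ :=
    Matrix.of fun i j : Fin m => ∫ y in I, f i y * g j y * w y with hA
  -- Step 1: pointwise expansion of the integrand into a double sum over permutations.
  have step1 : ∀ y : Fin m → ℝ,
      Matrix.det (Matrix.of fun i j : Fin m => f i (y j)) *
        Matrix.det (Matrix.of fun i j : Fin m => g i (y j)) * ∏ i, w (y i) =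
      ∑ σ : Equiv.Perm (Fin m), ∑ τ : Equiv.Perm (Fin m),
        (((Equiv.Perm.sign σ : ℤ) : ℝ) * ((Equiv.Perm.sign τ : ℤ) : ℝ)) *
          ∏ j, h (σ j) (τ j) (y j) := by
    intro y
    rw [Matrix.det_apply', Matrix.det_apply', Finset.sum_mul_sum, Finset.sum_mul]
    refine Finset.sum_congr rfl fun σ _ => ?_
    rw [Finset.sum_mul]
    refine Finset.sum_congr rfl fun τ _ => ?_
    simp only [Matrix.of_apply, hh, Finset.prod_mul_distrib]
    ring
  -- Step 2: exchange integral and sums, using Fubini on each term.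
  have step2 :
      (∫ y : Fin m → ℝ in S,
        Matrix.det (Matrix.of fun i j : Fin m => f i (y j)) *
          Matrix.det (Matrix.of fun i j : Fin m => g i (y j)) * ∏ i, w (y i)) =
      ∑ σ : Equiv.Perm (Fin m), ∑ τ : Equiv.Perm (Fin m),
        (((Equiv.Perm.sign σ : ℤ) : ℝ) * ((Equiv.Perm.sign τ : ℤ) : ℝ)) *
          ∏ j, A (σ j) (τ j) := by
    have hintterm : ∀ σ τ : Equiv.Perm (Fin m),
        IntegrableOn (fun y : Fin m → ℝ =>
          (((Equiv.Perm.sign σ : ℤ) : ℝ) * ((Equiv.Perm.sign τ : ℤ) : ℝ)) *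
            ∏ j, h (σ j) (τ j) (y j)) S :=
      fun σ τ => (integrableOn_pi_prod hI fun j => hfg (σ j) (τ j)).const_mul _
    calc (∫ y : Fin m → ℝ in S,
        Matrix.det (Matrix.of fun i j : Fin m => f i (y j)) *
          Matrix.det (Matrix.of fun i j : Fin m => g i (y j)) * ∏ i, w (y i))
        = ∫ y : Fin m → ℝ in S, ∑ σ : Equiv.Perm (Fin m), ∑ τ : Equiv.Perm (Fin m),
            (((Equiv.Perm.sign σ : ℤ) : ℝ) * ((Equiv.Perm.sign τ : ℤ) : ℝ)) *
              ∏ j, h (σ j) (τ j) (y j) := by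
          exact integral_congr_ae (Filter.Eventually.of_forall fun y => step1 y)
      _ = ∑ σ : Equiv.Perm (Fin m), ∑ τ : Equiv.Perm (Fin m),
            ∫ y : Fin m → ℝ in S,
              (((Equiv.Perm.sign σ : ℤ) : ℝ) * ((Equiv.Perm.sign τ : ℤ) : ℝ)) *
                ∏ j, h (σ j) (τ j) (y j) := by
          rw [integral_finset_sum _ fun σ _ => integrable_finset_sum _
            fun τ _ => hintterm σ τ]
          exact Finset.sum_congr rfl fun σ _ =>
            integral_finset_sum _ fun τ _ => hintterm σ τ
      _ = ∑ σ : Equiv.Perm (Fin m), ∑ τ : Equiv.Perm (Fin m),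
            (((Equiv.Perm.sign σ : ℤ) : ℝ) * ((Equiv.Perm.sign τ : ℤ) : ℝ)) *
              ∏ j, A (σ j) (τ j) := by
          refine Finset.sum_congr rfl fun σ _ => Finset.sum_congr rfl fun τ _ => ?_
          rw [integral_const_mul, integral_pi_prod hI fun j => hfg (σ j) (τ j)]
          rfl
  rw [step2]
  -- Step 3: algebraic identity for the double sum over permutations.
  rw [Finset.sum_comm]
  have step3 : ∀ τ : Equiv.Perm (Fin m),
      (∑ σ : Equiv.Perm (Fin m),
        (((Equiv.Perm.sign σ : ℤ) : ℝ) * ((Equiv.Perm.sign τ : ℤ) : ℝ)) *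
          ∏ j, A (σ j) (τ j)) = A.det := by
    intro τ
    rw [Matrix.det_apply' (M := A),
      ← Equiv.sum_comp (Equiv.mulRight τ⁻¹) (fun σ : Equiv.Perm (Fin m) =>
        ((Equiv.Perm.sign σ : ℤ) : ℝ) * ∏ i, A (σ i) i)]
    refine Finset.sum_congr rfl fun σ _ => ?_
    have hmr : (Equiv.mulRight τ⁻¹) σ = σ * τ⁻¹ := rfl
    have hsign : ((Equiv.Perm.sign ((Equiv.mulRight τ⁻¹) σ) : ℤ) : ℝ) =
        ((Equiv.Perm.sign σ : ℤ) : ℝ) * ((Equiv.Perm.sign τ : ℤ) : ℝ) := by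
      rw [hmr, map_mul, Equiv.Perm.sign_inv]
      push_cast
      ring
    have hprod : (∏ i, A (((Equiv.mulRight τ⁻¹) σ) i) i) = ∏ j, A (σ j) (τ j) := by
      rw [← Equiv.prod_comp τ (fun i => A (((Equiv.mulRight τ⁻¹) σ) i) i)]
      refine Finset.prod_congr rfl fun j _ => ?_
      simp [hmr]
    rw [hsign, hprod]
  rw [Finset.sum_congr rfl fun τ _ => step3 τ, Finset.sum_const, Finset.card_univ,
    Fintype.card_perm, Fintype.card_fin, nsmul_eq_mul]
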